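/- arXiv:2307.00816 — 2 statements merged into one kernel-verified Lean document; each statement's English description precedes it below -/
import Mathlib

section
/- The matrices D_Θ = [[2, 1], [-1, 0]] and D_Y = [[1, 0], [-1, 1]] generate SL(2, ℤ). -/
open Matrix ModularGroup Matrix.SpecialLinearGroup MatrixGroups

namespace DehnAux

def G : SL(2, ℤ) := ⟨!![2, 1; -1, 0], by norm_num [Matrix.det_fin_two_of]⟩
def H : SL(2, ℤ) := ⟨!![1, 0; -1, 1], by norm_num [Matrix.det_fin_two_of]⟩

abbrev K : Subgroup (SL(2, ℤ)) := Subgroup.closure {G, H}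

lemma hG : G ∈ K := Subgroup.subset_closure (by simp)
lemma hH : H ∈ K := Subgroup.subset_closure (by simp)

lemma coe_G : (G : Matrix (Fin 2) (Fin 2) ℤ) = !![2, 1; -1, 0] := rfl
lemma coe_H : (H : Matrix (Fin 2) (Fin 2) ℤ) = !![1, 0; -1, 1] := rfl

lemma S_eq : S = (G * H * H)⁻¹ := by
  apply Subtype.ext
  rw [coe_inv, coe_mul, coe_mul, coe_G, coe_H, coe_S]
  norm_num [Matrix.mul_fin_two, adjugate_fin_two]

lemma hS : S ∈ K := S_eq ▸ inv_mem (mul_mem (mul_mem hG hH) hH)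

lemma T_eq : T = S⁻¹ * H * S := by
  apply Subtype.ext
  rw [coe_mul, coe_mul, coe_inv, coe_S, coe_H, coe_T]
  norm_num [Matrix.mul_fin_two, adjugate_fin_two]

lemma hT : T ∈ K := T_eq ▸ mul_mem (mul_mem (inv_mem hS) hH) hS

end DehnAux

namespace DehnAux

open scoped MatrixGroups

lemma entry_helper (m : ℤ) (g : SL(2, ℤ)) :
    ((S * (T ^ m * g) : SL(2, ℤ)) : Matrix (Fin 2) (Fin 2) ℤ) 1 0 =
      (g : Matrix (Fin 2) (Fin 2) ℤ) 0 0 + m * (g : Matrix (Fin 2) (Fin 2) ℤ) 1 0 := by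
  simp [coe_mul, coe_S, coe_T_zpow, Matrix.mul_apply, Matrix.vecMul, dotProduct,
    Fin.sum_univ_two]

lemma mem_K : ∀ n : ℕ, ∀ g : SL(2, ℤ),
    ((g : Matrix (Fin 2) (Fin 2) ℤ) 1 0).natAbs = n → g ∈ K := by
  intro n
  induction n using Nat.strong_induction_on with
  | _ n ih =>
    intro g hg
    set a : ℤ := (g : Matrix (Fin 2) (Fin 2) ℤ) 0 0 with ha
    set b : ℤ := (g : Matrix (Fin 2) (Fin 2) ℤ) 0 1 with hb
    set c : ℤ := (g : Matrix (Fin 2) (Fin 2) ℤ) 1 0 with hc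
    set d : ℤ := (g : Matrix (Fin 2) (Fin 2) ℤ) 1 1 with hd
    have hdet : a * d - b * c = 1 := by
      have := g.property
      rwa [Matrix.det_fin_two] at this
    have hgm : (g : Matrix (Fin 2) (Fin 2) ℤ) = !![a, b; c, d] := by
      rw [ha, hb, hc, hd]; exact Matrix.eta_fin_two _
    by_cases hc0 : c = 0
    · -- c = 0 : g is ± a power of T
      have had : a * d = 1 := by rw [hc0] at hdet; linarith
      rcases Int.mul_eq_one_iff_eq_one_or_neg_one.mp had with ⟨h1, h2⟩ | ⟨h1, h2⟩
      · have : g = T ^ b := by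
          apply Subtype.ext
          rw [coe_T_zpow, hgm, hc0, h1, h2]
        rw [this]
        exact zpow_mem hT b
      · have : g = S * S * T ^ (-b) := by
          apply Subtype.ext
          rw [coe_mul, coe_mul, coe_S, coe_T_zpow, hgm, hc0, h1, h2]
          norm_num [Matrix.mul_fin_two]
        rw [this]
        exact mul_mem (mul_mem hS hS) (zpow_mem hT (-b))
    · -- c ≠ 0 : Euclidean step
      set q : ℤ := a / c with hq
      set g' : SL(2, ℤ) := S * (T ^ (-q) * g) with hg'
      have hent : (g' : Matrix (Fin 2) (Fin 2) ℤ) 1 0 = a % c := by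
        rw [hg', entry_helper, ← ha, ← hc, Int.emod_def, hq]; ring
      have hlt : ((g' : Matrix (Fin 2) (Fin 2) ℤ) 1 0).natAbs < n := by
        rw [hent, ← hg]
        have h1 : 0 ≤ a % c := Int.emod_nonneg a hc0
        have h2 : a % c < |c| := by have := Int.emod_lt a hc0; rwa [Int.abs_eq_natAbs]
        rw [Int.abs_eq_natAbs] at h2
        omega
      have hg'K : g' ∈ K := ih _ hlt g' rfl
      have : g = T ^ q * (S⁻¹ * g') := by
        rw [hg']; group
      rw [this]
      exact mul_mem (zpow_mem hT q) (mul_mem (inv_mem hS) hg'K)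

end DehnAux

theorem dehn_twists_generate_SL2Z :
    Subgroup.closure
      ({⟨!![2, 1; -1, 0], by norm_num [Matrix.det_fin_two_of]⟩,
        ⟨!![1, 0; -1, 1], by norm_num [Matrix.det_fin_two_of]⟩} :
        Set (Matrix.SpecialLinearGroup (Fin 2) ℤ)) = ⊤ := by
  rw [eq_top_iff]
  intro g _
  exact DehnAux.mem_K _ g rfl
end

section
/- The subgroup of SL(2, ℤ) generated by the matrices [[3, 2], [-2, -1]] and [[1, 0], [-1, 1]] has index 3 in SL(2, ℤ). -/
open Matrix Matrix.SpecialLinearGroup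

abbrev SL2Z := Matrix.SpecialLinearGroup (Fin 2) ℤ
abbrev SL2F2 := Matrix.SpecialLinearGroup (Fin 2) (ZMod 2)

instance : DecidableEq SL2Z := fun a b => decidable_of_iff (a.1 = b.1) Subtype.ext_iff.symm
instance : DecidableEq SL2F2 := fun a b => decidable_of_iff (a.1 = b.1) Subtype.ext_iff.symm
instance : Fintype SL2F2 := Subtype.fintype _

def Ag : SL2Z := ⟨!![3, 2; -2, -1], by norm_num [Matrix.det_fin_two_of]⟩
def Bg : SL2Z := ⟨!![1, 0; -1, 1], by norm_num [Matrix.det_fin_two_of]⟩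
def Ug : SL2Z := ⟨!![1, 2; 0, 1], by norm_num [Matrix.det_fin_two_of]⟩
def Lg : SL2Z := ⟨!![1, 0; 2, 1], by norm_num [Matrix.det_fin_two_of]⟩
def Ng : SL2Z := ⟨!![-1, 0; 0, -1], by norm_num [Matrix.det_fin_two_of]⟩

def H : Subgroup SL2Z := Subgroup.closure {Ag, Bg}

theorem hAgmem : Ag ∈ H := Subgroup.subset_closure (by left; rfl)
theorem hBgmem : Bg ∈ H := Subgroup.subset_closure (by right; rfl)

theorem hNg : Ng ∈ H := by
  have h : (Ag * Bg) ^ 2 = Ng := by decide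
  rw [← h]; exact pow_mem (mul_mem hAgmem hBgmem) 2

theorem hLg : Lg ∈ H := by
  have h : (Bg * Bg)⁻¹ = Lg := by decide
  rw [← h]; exact inv_mem (mul_mem hBgmem hBgmem)

theorem hUg : Ug ∈ H := by
  have h : (Ag * Bg) ^ 2 * (Ag * Bg * Bg)⁻¹ = Ug := by decide
  rw [← h]
  exact mul_mem (pow_mem (mul_mem hAgmem hBgmem) 2)
    (inv_mem (mul_mem (mul_mem hAgmem hBgmem) hBgmem))

theorem coe_Ug_zpow (k : ℤ) : ((Ug ^ k : SL2Z) : Matrix (Fin 2) (Fin 2) ℤ) = !![1, 2*k; 0, 1] := by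
  induction k using Int.induction_on with
  | zero => simp [Matrix.one_fin_two]
  | succ n ih =>
      rw [_root_.zpow_add_one, coe_mul, ih]
      rw [show (Ug : Matrix (Fin 2) (Fin 2) ℤ) = !![1,2;0,1] from rfl, Matrix.mul_fin_two]
      norm_num; ring_nf
  | pred n ih =>
      rw [_root_.zpow_sub_one, coe_mul, ih]
      rw [show ((Ug⁻¹ : SL2Z) : Matrix (Fin 2) (Fin 2) ℤ) = !![1,-2;0,1] by
        rw [coe_inv]; rw [show (Ug : Matrix (Fin 2) (Fin 2) ℤ) = !![1,2;0,1] from rfl,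
          Matrix.adjugate_fin_two]; norm_num, Matrix.mul_fin_two]
      norm_num; ring_nf

theorem coe_Lg_zpow (k : ℤ) : ((Lg ^ k : SL2Z) : Matrix (Fin 2) (Fin 2) ℤ) = !![1, 0; 2*k, 1] := by
  induction k using Int.induction_on with
  | zero => simp [Matrix.one_fin_two]
  | succ n ih =>
      rw [_root_.zpow_add_one, coe_mul, ih]
      rw [show (Lg : Matrix (Fin 2) (Fin 2) ℤ) = !![1,0;2,1] from rfl, Matrix.mul_fin_two]
      norm_num; ring_nf
  | pred n ih =>
      rw [_root_.zpow_sub_one, coe_mul, ih]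
      rw [show ((Lg⁻¹ : SL2Z) : Matrix (Fin 2) (Fin 2) ℤ) = !![1,0;-2,1] by
        rw [coe_inv]; rw [show (Lg : Matrix (Fin 2) (Fin 2) ℤ) = !![1,0;2,1] from rfl,
          Matrix.adjugate_fin_two]; norm_num, Matrix.mul_fin_two]
      norm_num; ring_nf

theorem exists_small_pos (x m : ℤ) (hm : 0 < m) (hpar : (x + m) % 2 = 1) :
    ∃ q : ℤ, (x - 2*q*m).natAbs < m.natAbs := by
  set r := x % (2*m) with hrdef
  have h2m : (0:ℤ) < 2*m := by omega
  have hr0 : 0 ≤ r := Int.emod_nonneg x (by omega)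
  have hr1 : r < 2*m := Int.emod_lt_of_pos x h2m
  have hkey : x - 2*(x/(2*m))*m = r := by
    have := Int.mul_ediv_add_emod x (2*m)
    linarith [this]
  have hpar2 : r % 2 = x % 2 := by
    have : (2:ℤ) ∣ (x - r) := ⟨(x/(2*m))*m, by linarith [hkey]⟩
    omega
  rcases lt_or_gt_of_ne (show r ≠ m by omega) with h | h
  · exact ⟨x/(2*m), by rw [hkey]; omega⟩
  · refine ⟨x/(2*m) + 1, ?_⟩
    have h2 : x - 2*(x/(2*m)+1)*m = r - 2*m := by linarith [hkey]
    rw [h2]; omega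

theorem exists_small (x m : ℤ) (hm : m ≠ 0) (hpar : (x + m) % 2 = 1) :
    ∃ q : ℤ, (x - 2*q*m).natAbs < m.natAbs ∧ (2*q*m) % 2 = 0 := by
  have hpar' : ∀ q : ℤ, (2*q*m) % 2 = 0 := fun q => by
    rw [show 2*q*m = 2*(q*m) by ring]; exact Int.mul_emod_right 2 _
  rcases hm.lt_or_gt with h | h
  · obtain ⟨q, hq⟩ := exists_small_pos x (-m) (by omega) (by omega)
    exact ⟨-q, by rw [show x - 2*(-q)*m = x - 2*q*(-m) by ring]; simpa using hq, hpar' _⟩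
  · obtain ⟨q, hq⟩ := exists_small_pos x m h hpar
    exact ⟨q, hq, hpar' _⟩

theorem main_ind : ∀ n : ℕ, ∀ g : SL2Z,
    ((g : Matrix (Fin 2) (Fin 2) ℤ) 0 0).natAbs + ((g : Matrix (Fin 2) (Fin 2) ℤ) 1 0).natAbs ≤ n →
    ((g : Matrix (Fin 2) (Fin 2) ℤ) 0 0) % 2 = 1 →
    ((g : Matrix (Fin 2) (Fin 2) ℤ) 0 1) % 2 = 0 →
    ((g : Matrix (Fin 2) (Fin 2) ℤ) 1 0) % 2 = 0 → g ∈ H := by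
  intro n
  induction n using Nat.strong_induction_on with
  | _ n IH =>
  intro g hbound ha hb hc
  have hdet : (g : Matrix (Fin 2) (Fin 2) ℤ) 0 0 * (g : Matrix (Fin 2) (Fin 2) ℤ) 1 1
      - (g : Matrix (Fin 2) (Fin 2) ℤ) 0 1 * (g : Matrix (Fin 2) (Fin 2) ℤ) 1 0 = 1 := by
    have h := g.2
    rw [Matrix.det_fin_two] at h
    exact h
  by_cases hc0 : (g : Matrix (Fin 2) (Fin 2) ℤ) 1 0 = 0
  · have had : (g : Matrix (Fin 2) (Fin 2) ℤ) 0 0 * (g : Matrix (Fin 2) (Fin 2) ℤ) 1 1 = 1 := by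
      rw [hc0] at hdet; linarith
    rcases Int.mul_eq_one_iff_eq_one_or_neg_one.mp had with ⟨h1, h2⟩ | ⟨h1, h2⟩
    · obtain ⟨k, hk⟩ : ∃ k, (g : Matrix (Fin 2) (Fin 2) ℤ) 0 1 = 2*k :=
        ⟨(g : Matrix (Fin 2) (Fin 2) ℤ) 0 1 / 2, by omega⟩
      have hg : g = Ug ^ k := by
        apply Subtype.ext
        rw [coe_Ug_zpow, Matrix.eta_fin_two (g : Matrix (Fin 2) (Fin 2) ℤ), h1, hc0, h2, hk]
      rw [hg]; exact zpow_mem hUg k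
    · obtain ⟨k, hk⟩ : ∃ k, (g : Matrix (Fin 2) (Fin 2) ℤ) 0 1 = -(2*k) :=
        ⟨-((g : Matrix (Fin 2) (Fin 2) ℤ) 0 1 / 2), by omega⟩
      have hg : g = Ng * Ug ^ k := by
        apply Subtype.ext
        rw [coe_mul, coe_Ug_zpow,
          show (Ng : Matrix (Fin 2) (Fin 2) ℤ) = !![-1,0;0,-1] from rfl, Matrix.mul_fin_two,
          Matrix.eta_fin_two (g : Matrix (Fin 2) (Fin 2) ℤ), h1, hc0, h2, hk]
        norm_num
      rw [hg]; exact mul_mem hNg (zpow_mem hUg k)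
  · have hane : ((g : Matrix (Fin 2) (Fin 2) ℤ) 0 0).natAbs ≠
        ((g : Matrix (Fin 2) (Fin 2) ℤ) 1 0).natAbs := by omega
    rcases hane.lt_or_gt with hlt | hlt
    · -- |a| < |c| : reduce c via Lg
      obtain ⟨q, hq, hqpar⟩ := exists_small ((g : Matrix (Fin 2) (Fin 2) ℤ) 1 0)
        ((g : Matrix (Fin 2) (Fin 2) ℤ) 0 0) (by omega) (by omega)
      have hcoe : ((Lg^(-q) * g : SL2Z) : Matrix (Fin 2) (Fin 2) ℤ) =
          !![(g : Matrix (Fin 2) (Fin 2) ℤ) 0 0, (g : Matrix (Fin 2) (Fin 2) ℤ) 0 1;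
             (g : Matrix (Fin 2) (Fin 2) ℤ) 1 0 - 2*q*((g : Matrix (Fin 2) (Fin 2) ℤ) 0 0),
             (g : Matrix (Fin 2) (Fin 2) ℤ) 1 1 - 2*q*((g : Matrix (Fin 2) (Fin 2) ℤ) 0 1)] := by
        rw [coe_mul, coe_Lg_zpow]
        conv_lhs => rw [Matrix.eta_fin_two (g : Matrix (Fin 2) (Fin 2) ℤ)]
        rw [Matrix.mul_fin_two]
        norm_num; ring_nf; exact ⟨trivial, trivial⟩
      have e00 : ((Lg^(-q) * g : SL2Z) : Matrix (Fin 2) (Fin 2) ℤ) 0 0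
          = (g : Matrix (Fin 2) (Fin 2) ℤ) 0 0 := by rw [hcoe]; simp
      have e01 : ((Lg^(-q) * g : SL2Z) : Matrix (Fin 2) (Fin 2) ℤ) 0 1
          = (g : Matrix (Fin 2) (Fin 2) ℤ) 0 1 := by rw [hcoe]; simp
      have e10 : ((Lg^(-q) * g : SL2Z) : Matrix (Fin 2) (Fin 2) ℤ) 1 0
          = (g : Matrix (Fin 2) (Fin 2) ℤ) 1 0 - 2*q*((g : Matrix (Fin 2) (Fin 2) ℤ) 0 0) := by
        rw [hcoe]; simp
      have hmem : Lg^(-q) * g ∈ H := by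
        refine IH (((g : Matrix (Fin 2) (Fin 2) ℤ) 0 0).natAbs
            + ((g : Matrix (Fin 2) (Fin 2) ℤ) 1 0 - 2*q*((g : Matrix (Fin 2) (Fin 2) ℤ) 0 0)).natAbs)
          (by omega) _ (by rw [e00, e10]) (by rw [e00]; exact ha) (by rw [e01]; exact hb)
          (by rw [e10]; omega)
      have hgr : g = Lg^q * (Lg^(-q) * g) := by group
      rw [hgr]; exact mul_mem (zpow_mem hLg q) hmem
    · -- |c| < |a| : reduce a via Ug
      obtain ⟨q, hq, hqpar⟩ := exists_small ((g : Matrix (Fin 2) (Fin 2) ℤ) 0 0)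
        ((g : Matrix (Fin 2) (Fin 2) ℤ) 1 0) (by omega) (by omega)
      have hcoe : ((Ug^(-q) * g : SL2Z) : Matrix (Fin 2) (Fin 2) ℤ) =
          !![(g : Matrix (Fin 2) (Fin 2) ℤ) 0 0 - 2*q*((g : Matrix (Fin 2) (Fin 2) ℤ) 1 0),
             (g : Matrix (Fin 2) (Fin 2) ℤ) 0 1 - 2*q*((g : Matrix (Fin 2) (Fin 2) ℤ) 1 1);
             (g : Matrix (Fin 2) (Fin 2) ℤ) 1 0, (g : Matrix (Fin 2) (Fin 2) ℤ) 1 1] := by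
        rw [coe_mul, coe_Ug_zpow]
        conv_lhs => rw [Matrix.eta_fin_two (g : Matrix (Fin 2) (Fin 2) ℤ)]
        rw [Matrix.mul_fin_two]
        norm_num; ring_nf; exact ⟨trivial, trivial⟩
      have e00 : ((Ug^(-q) * g : SL2Z) : Matrix (Fin 2) (Fin 2) ℤ) 0 0
          = (g : Matrix (Fin 2) (Fin 2) ℤ) 0 0 - 2*q*((g : Matrix (Fin 2) (Fin 2) ℤ) 1 0) := by
        rw [hcoe]; simp
      have e01 : ((Ug^(-q) * g : SL2Z) : Matrix (Fin 2) (Fin 2) ℤ) 0 1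
          = (g : Matrix (Fin 2) (Fin 2) ℤ) 0 1 - 2*q*((g : Matrix (Fin 2) (Fin 2) ℤ) 1 1) := by
        rw [hcoe]; simp
      have e10 : ((Ug^(-q) * g : SL2Z) : Matrix (Fin 2) (Fin 2) ℤ) 1 0
          = (g : Matrix (Fin 2) (Fin 2) ℤ) 1 0 := by rw [hcoe]; simp
      have hqpar2 : (2*q*((g : Matrix (Fin 2) (Fin 2) ℤ) 1 1)) % 2 = 0 := by
        rw [show 2*q*((g : Matrix (Fin 2) (Fin 2) ℤ) 1 1)
          = 2*(q*((g : Matrix (Fin 2) (Fin 2) ℤ) 1 1)) by ring]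
        exact Int.mul_emod_right 2 _
      have hd : (g : Matrix (Fin 2) (Fin 2) ℤ) 1 1 % 2 = 1 := by
        obtain ⟨s, hs⟩ : (2:ℤ) ∣ ((g : Matrix (Fin 2) (Fin 2) ℤ) 0 1
            * (g : Matrix (Fin 2) (Fin 2) ℤ) 1 0) :=
          Dvd.dvd.mul_right (by omega : (2:ℤ) ∣ (g : Matrix (Fin 2) (Fin 2) ℤ) 0 1) _
        have h2 : (g : Matrix (Fin 2) (Fin 2) ℤ) 0 0 * (g : Matrix (Fin 2) (Fin 2) ℤ) 1 1
            = 1 + 2*s := by linarith [hdet]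
        rcases Int.emod_two_eq_zero_or_one ((g : Matrix (Fin 2) (Fin 2) ℤ) 1 1) with h | h
        · exfalso
          obtain ⟨t, ht⟩ : (2:ℤ) ∣ ((g : Matrix (Fin 2) (Fin 2) ℤ) 1 1) := by omega
          have h3 : (g : Matrix (Fin 2) (Fin 2) ℤ) 0 0 * (g : Matrix (Fin 2) (Fin 2) ℤ) 1 1
              = 2*((g : Matrix (Fin 2) (Fin 2) ℤ) 0 0 * t) := by rw [ht]; ring
          omega
        · exact h
      have hmem : Ug^(-q) * g ∈ H := by
        refine IH (((g : Matrix (Fin 2) (Fin 2) ℤ) 0 0 - 2*q*((g : Matrix (Fin 2) (Fin 2) ℤ) 1 0)).natAbs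
            + ((g : Matrix (Fin 2) (Fin 2) ℤ) 1 0).natAbs)
          (by omega) _ (by rw [e00, e10]) (by rw [e00]; omega) (by rw [e01]; omega)
          (by rw [e10]; exact hc)
      have hgr : g = Ug^q * (Ug^(-q) * g) := by group
      rw [hgr]; exact mul_mem (zpow_mem hUg q) hmem

def redmap : SL2Z →* SL2F2 := Matrix.SpecialLinearGroup.map (Int.castRingHom (ZMod 2))

theorem redmap_entry (g : SL2Z) (i j : Fin 2) :
    ((redmap g : SL2F2) : Matrix (Fin 2) (Fin 2) (ZMod 2)) i j
      = (((g : Matrix (Fin 2) (Fin 2) ℤ) i j : ℤ) : ZMod 2) := rfl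

theorem ker_le : redmap.ker ≤ H := by
  intro g hg
  rw [MonoidHom.mem_ker] at hg
  have hent : ∀ i j : Fin 2, (((g : Matrix (Fin 2) (Fin 2) ℤ) i j : ℤ) : ZMod 2)
      = (1 : Matrix (Fin 2) (Fin 2) (ZMod 2)) i j := by
    intro i j
    rw [← redmap_entry, hg, Matrix.SpecialLinearGroup.coe_one]
  have conv0 : ∀ x : ℤ, ((x : ZMod 2) = 0) → x % 2 = 0 := by
    intro x hx
    have := (ZMod.intCast_zmod_eq_zero_iff_dvd x 2).mp hx
    omega
  have conv1 : ∀ x : ℤ, ((x : ZMod 2) = 1) → x % 2 = 1 := by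
    intro x hx
    have h2 : ((x - 1 : ℤ) : ZMod 2) = 0 := by push_cast; rw [hx]; ring
    have := (ZMod.intCast_zmod_eq_zero_iff_dvd (x-1) 2).mp h2
    omega
  refine main_ind _ g le_rfl (conv1 _ ?_) (conv0 _ ?_) (conv0 _ ?_)
  · have := hent 0 0; rwa [Matrix.one_apply_eq] at this
  · have := hent 0 1; rwa [Matrix.one_apply_ne (by decide)] at this
  · have := hent 1 0; rwa [Matrix.one_apply_ne (by decide)] at this

theorem H_eq : H = Subgroup.comap redmap (Subgroup.zpowers (redmap Bg)) := by
  apply le_antisymm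
  · rw [H, Subgroup.closure_le]
    intro x hx
    rcases hx with rfl | rfl
    · have h1 : redmap Ag = 1 := by decide
      simp only [Subgroup.coe_comap, Set.mem_preimage, SetLike.mem_coe, h1]
      exact Subgroup.one_mem _
    · simp only [Subgroup.coe_comap, Set.mem_preimage, SetLike.mem_coe]
      exact Subgroup.mem_zpowers _
  · intro g hg
    rw [Subgroup.mem_comap] at hg
    obtain ⟨n, hn0⟩ := hg
    have hn : redmap Bg ^ n = redmap g := hn0
    have hb2 : (redmap Bg) ^ (2:ℤ) = 1 := by decide
    rcases Int.even_or_odd n with ⟨m, hm⟩ | ⟨m, hm⟩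
    · have h1 : redmap g = 1 := by
        rw [← hn, hm, show m + m = 2*m by ring, _root_.zpow_mul, hb2, _root_.one_zpow]
      exact ker_le (MonoidHom.mem_ker.mpr h1)
    · have h1 : redmap (g * Bg⁻¹) = 1 := by
        rw [_root_.map_mul, _root_.map_inv, ← hn, hm, show 2*m+1 = m*2 + 1 by ring,
          _root_.zpow_add_one, mul_assoc, mul_inv_cancel, mul_one, mul_comm m 2,
          _root_.zpow_mul, hb2, _root_.one_zpow]
      have h2 : g * Bg⁻¹ ∈ H := ker_le (MonoidHom.mem_ker.mpr h1)
      have h3 : g = (g * Bg⁻¹) * Bg := by group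
      rw [h3]; exact mul_mem h2 hBgmem

theorem red_surj : Function.Surjective redmap := by
  intro y
  have h : y = redmap ⟨!![1, 0; 0, 1], by norm_num [Matrix.det_fin_two_of]⟩ ∨
      y = redmap ⟨!![1, 1; 0, 1], by norm_num [Matrix.det_fin_two_of]⟩ ∨
      y = redmap ⟨!![1, 0; 1, 1], by norm_num [Matrix.det_fin_two_of]⟩ ∨
      y = redmap ⟨!![0, -1; 1, 0], by norm_num [Matrix.det_fin_two_of]⟩ ∨
      y = redmap ⟨!![1, -1; 1, 0], by norm_num [Matrix.det_fin_two_of]⟩ ∨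
      y = redmap ⟨!![0, -1; 1, 1], by norm_num [Matrix.det_fin_two_of]⟩ := by
    revert y; decide
  rcases h with h|h|h|h|h|h <;> exact ⟨_, h.symm⟩

theorem H_index : H.index = 3 := by
  rw [H_eq, Subgroup.index_comap_of_surjective _ red_surj]
  have hcard : Nat.card SL2F2 = 6 := by rw [Nat.card_eq_fintype_card]; decide
  have horder : Nat.card (Subgroup.zpowers (redmap Bg)) = 2 := by
    rw [Nat.card_zpowers]
    exact orderOf_eq_prime (by decide) (by decide)
  have hmul := Subgroup.index_mul_card (Subgroup.zpowers (redmap Bg))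
  rw [horder, hcard] at hmul
  omega

theorem index_three_subgroup :
    (Subgroup.closure
      ({⟨!![3, 2; -2, -1], by norm_num [Matrix.det_fin_two_of]⟩,
        ⟨!![1, 0; -1, 1], by norm_num [Matrix.det_fin_two_of]⟩} :
        Set (Matrix.SpecialLinearGroup (Fin 2) ℤ))).index = 3 := H_index
end
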